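/- For the dP1 quiver with potential above, the mutation at vertex 1 yields the quiver with arrows a*: 2→1, b*: 3→1, R_1*, R_2*: 1→4, c_1, c_2: 2→3, d_2: 3→4, R_3, [aR_1], [aR_2]: 4→2, and potential S̄ = c_2 R_3 R_1* b* + c_1 R_3 R_2* b* + d_2 c_2 [aR_2] − d_2 c_1 [aR_1] + [aR_1] R_1* a* + [aR_2] R_2* a*; in particular the intermediate potential S̃ decomposes, after the right equivalence φ (d_1 ↦ d_1 − R_1* b*, d_3 ↦ −d_3 + R_2* b*, [bR_1] ↦ [bR_1] + c_2 R_3, [bR_2] ↦ [bR_2] + c_1 R_3), as a trivial part plus the reduced potential S̄. -/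

import Mathlib

/-- A quiver given by a vertex set, an arrow set and source/target maps. -/
structure Quiv where
  V : Type
  E : Type
  s : E → V
  t : E → V

namespace Quiv

/-- A path `a₁ a₂ ⋯ aₙ`, written with the composition-of-functions convention,
is a list of arrows such that the source of each arrow is the target of the next one. -/
def IsPath (q : Quiv) : List q.E → Prop
  | [] => True
  | [_] => True
  | a :: b :: l => q.s a = q.t b ∧ IsPath q (b :: l)

variable (q : Quiv)

/-- The source of a (nonempty) path. -/
def pSrc (l : List q.E) : Option q.V := l.getLast?.map q.s

/-- The target of a (nonempty) path. -/
def pTgt (l : List q.E) : Option q.V := l.head?.map q.t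

/-- A cycle is a nonempty path whose source equals its target. -/
def IsCycle (l : List q.E) : Prop := l ≠ [] ∧ q.IsPath l ∧ q.pSrc l = q.pTgt l

variable (K : Type) [Field K]

open Classical in
/-- The cyclic derivative of a single cycle `a₁ ⋯ aₙ` with respect to an arrow `x`:
`∑ₖ δ(x, aₖ) • a_{k+1} ⋯ aₙ a₁ ⋯ a_{k-1}`, as an element of the vector space
spanned by paths. -/
noncomputable def cycDerList (x : q.E) (l : List q.E) : List q.E →₀ K :=
  ∑ k ∈ Finset.range l.length,
    if l[k]? = some x then Finsupp.single (l.drop (k + 1) ++ l.take k) 1 else 0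

/-- The cyclic derivative of a potential (a linear combination of cycles)
with respect to an arrow `x`, extended linearly. -/
noncomputable def cycDer (x : q.E) (S : List q.E →₀ K) : List q.E →₀ K :=
  S.sum fun l c => c • q.cycDerList K x l

/-- Two potentials are cyclically equivalent if their difference lies in the span of
the elements `a₁ ⋯ a_{n-1} aₙ - a₂ ⋯ aₙ a₁` for cycles `a₁ ⋯ aₙ`. -/
def CycEquiv (S S' : List q.E →₀ K) : Prop :=
  S - S' ∈ Submodule.span K
    {x : List q.E →₀ K | ∃ l : List q.E, q.IsCycle l ∧
      x = Finsupp.single l 1 - Finsupp.single (l.rotate 1) 1}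

end Quiv

namespace Quiv

variable (q : Quiv) (K : Type) [Field K]

/-- Substitution of linear combinations of paths for arrows, extended multiplicatively
to a single path (concatenation of lists corresponds to composition of paths). -/
noncomputable def substList (f : q.E → (List q.E →₀ K)) : List q.E → (List q.E →₀ K)
  | [] => Finsupp.single [] 1
  | e :: l =>
      (f e).sum fun le ce =>
        (substList f l).sum fun lr cr => Finsupp.single (le ++ lr) (ce * cr)

/-- The algebra endomorphism of the path algebra determined by a substitution rule
`f` on arrows (fixing the vertex idempotents), applied to a potential. -/
noncomputable def subst (f : q.E → (List q.E →₀ K)) (S : List q.E →₀ K) :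
    List q.E →₀ K :=
  S.sum fun l c => c • q.substList K f l

end Quiv

/-- The arrows of the quiver `Q̃` obtained in the mutation of the completed `dP1` quiver at
vertex `1`: the reversed arrows `a* : 2 → 1`, `b* : 3 → 1`, `R₁* R₂* : 1 → 4`, the old arrows
`c₁ c₂ : 2 → 3`, `d₁ d₂ d₃ : 3 → 4`, `R₃ : 4 → 2`, and the composite (mesonic) arrows
`[aR₁] [aR₂] : 4 → 2`, `[bR₁] [bR₂] : 4 → 3`. -/
inductive MutArr : Type
  | as | bs | R1s | R2s | c1 | c2 | d1 | d2 | d3 | R3 | aR1 | aR2 | bR1 | bR2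
deriving DecidableEq

open MutArr in
/-- The quiver `Q̃` of the mutation at vertex `1` of the completed `dP1` quiver
(vertices `1, 2, 3, 4` encoded as `Fin 4`). -/
def dP1Mut : Quiv where
  V := Fin 4
  E := MutArr
  s := fun e => match e with
    | as => 1 | bs => 2 | R1s => 0 | R2s => 0 | c1 => 1 | c2 => 1
    | d1 => 2 | d2 => 2 | d3 => 2 | R3 => 3 | aR1 => 3 | aR2 => 3 | bR1 => 3 | bR2 => 3
  t := fun e => match e with
    | as => 0 | bs => 0 | R1s => 3 | R2s => 3 | c1 => 2 | c2 => 2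
    | d1 => 3 | d2 => 3 | d3 => 3 | R3 => 1 | aR1 => 1 | aR2 => 1 | bR1 => 2 | bR2 => 2

open MutArr in
/-- The intermediate potential `S̃` of the mutation at vertex `1` of the `dP1` quiver:
`S̃ = R₃d₃c₁ − R₃d₁c₂ − d₂c₁[aR₁] + d₁[bR₁] − d₃[bR₂] + d₂c₂[aR₂]
  + [aR₁]R₁*a* + [aR₂]R₂*a* + [bR₁]R₁*b* + [bR₂]R₂*b*`. -/
noncomputable def dP1MutPotTilde (K : Type) [Field K] : List dP1Mut.E →₀ K :=
  Finsupp.single [R3, d3, c1] 1 - Finsupp.single [R3, d1, c2] 1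
    - Finsupp.single [d2, c1, aR1] 1 + Finsupp.single [d1, bR1] 1
    - Finsupp.single [d3, bR2] 1 + Finsupp.single [d2, c2, aR2] 1
    + Finsupp.single [aR1, R1s, as] 1 + Finsupp.single [aR2, R2s, as] 1
    + Finsupp.single [bR1, R1s, bs] 1 + Finsupp.single [bR2, R2s, bs] 1

open MutArr in
/-- The reduced (mutated) potential
`S̄ = c₂R₃R₁*b* + c₁R₃R₂*b* + d₂c₂[aR₂] − d₂c₁[aR₁] + [aR₁]R₁*a* + [aR₂]R₂*a*`. -/
noncomputable def dP1MutPotBar (K : Type) [Field K] : List dP1Mut.E →₀ K :=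
  Finsupp.single [c2, R3, R1s, bs] 1 + Finsupp.single [c1, R3, R2s, bs] 1
    + Finsupp.single [d2, c2, aR2] 1 - Finsupp.single [d2, c1, aR1] 1
    + Finsupp.single [aR1, R1s, as] 1 + Finsupp.single [aR2, R2s, as] 1

open MutArr in
/-- The substitution rule of the right equivalence `φ`:
`d₁ ↦ d₁ − R₁*b*`, `d₃ ↦ −d₃ + R₂*b*`, `[bR₁] ↦ [bR₁] + c₂R₃`, `[bR₂] ↦ [bR₂] + c₁R₃`,
all other arrows fixed. -/
noncomputable def dP1MutPhi (K : Type) [Field K] : MutArr → (List dP1Mut.E →₀ K) :=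
  fun e => match e with
    | d1 => Finsupp.single [d1] 1 - Finsupp.single [R1s, bs] 1
    | d3 => -Finsupp.single [d3] 1 + Finsupp.single [R2s, bs] 1
    | bR1 => Finsupp.single [bR1] 1 + Finsupp.single [c2, R3] 1
    | bR2 => Finsupp.single [bR2] 1 + Finsupp.single [c1, R3] 1
    | x => Finsupp.single [x] 1


section Aux

open MutArr

private lemma subst_single' (q : Quiv) (K : Type) [Field K] (f : q.E → (List q.E →₀ K))
    (l : List q.E) (c : K) :
    q.subst K f (Finsupp.single l c) = c • q.substList K f l :=
  Finsupp.sum_single_index (by simp)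

private lemma subst_add' (q : Quiv) (K : Type) [Field K] (f : q.E → (List q.E →₀ K))
    (S S' : List q.E →₀ K) :
    q.subst K f (S + S') = q.subst K f S + q.subst K f S' :=
  Finsupp.sum_add_index' (by simp) (fun _ c c' => add_smul c c' _)

private lemma subst_sub' (q : Quiv) (K : Type) [Field K] (f : q.E → (List q.E →₀ K))
    (S S' : List q.E →₀ K) :
    q.subst K f (S - S') = q.subst K f S - q.subst K f S' :=
  Finsupp.sum_sub_index (fun _ c c' => sub_smul c c' _)

private lemma subst_eval (K : Type) [Field K] :
    dP1Mut.subst K (dP1MutPhi K) (dP1MutPotTilde K) =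
      ((Finsupp.single [d1, bR1] 1 + Finsupp.single [d3, bR2] 1) + dP1MutPotBar K)
      + (-(Finsupp.single [R3, d3, c1] 1 - Finsupp.single [d3, c1, R3] 1)
        - (Finsupp.single [R3, d1, c2] 1 - Finsupp.single [d1, c2, R3] 1)
        + (Finsupp.single [R3, R2s, bs, c1] 1 - Finsupp.single [R2s, bs, c1, R3] 1)
        + (Finsupp.single [R3, R1s, bs, c2] 1 - Finsupp.single [R1s, bs, c2, R3] 1)
        + (Finsupp.single [bR1, R1s, bs] 1 - Finsupp.single [R1s, bs, bR1] 1)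
        + (Finsupp.single [bR2, R2s, bs] 1 - Finsupp.single [R2s, bs, bR2] 1)) := by
  rw [show dP1MutPotTilde K = Finsupp.single ([R3, d3, c1] : List dP1Mut.E) (1 : K) - Finsupp.single ([R3, d1, c2] : List dP1Mut.E) (1 : K)
      - Finsupp.single ([d2, c1, aR1] : List dP1Mut.E) (1 : K) + Finsupp.single ([d1, bR1] : List dP1Mut.E) (1 : K)
      - Finsupp.single ([d3, bR2] : List dP1Mut.E) (1 : K) + Finsupp.single ([d2, c2, aR2] : List dP1Mut.E) (1 : K)
      + Finsupp.single ([aR1, R1s, as] : List dP1Mut.E) (1 : K) + Finsupp.single ([aR2, R2s, as] : List dP1Mut.E) (1 : K)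
      + Finsupp.single ([bR1, R1s, bs] : List dP1Mut.E) (1 : K) + Finsupp.single ([bR2, R2s, bs] : List dP1Mut.E) (1 : K) from rfl]
  obtain ⟨f, hf⟩ : ∃ f : dP1Mut.E → (List dP1Mut.E →₀ K), f = dP1MutPhi K := ⟨_, rfl⟩
  rw [← hf]
  simp only [subst_add' dP1Mut K f, subst_sub' dP1Mut K f,
    subst_single' dP1Mut K f]
  have eas : f as = Finsupp.single ([as] : List dP1Mut.E) (1 : K) := by subst hf; rfl
  have ebs : f bs = Finsupp.single ([bs] : List dP1Mut.E) (1 : K) := by subst hf; rfl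
  have eR1s : f R1s = Finsupp.single ([R1s] : List dP1Mut.E) (1 : K) := by subst hf; rfl
  have eR2s : f R2s = Finsupp.single ([R2s] : List dP1Mut.E) (1 : K) := by subst hf; rfl
  have ec1 : f c1 = Finsupp.single ([c1] : List dP1Mut.E) (1 : K) := by subst hf; rfl
  have ec2 : f c2 = Finsupp.single ([c2] : List dP1Mut.E) (1 : K) := by subst hf; rfl
  have ed1 : f d1 = Finsupp.single ([d1] : List dP1Mut.E) (1 : K) - Finsupp.single ([R1s, bs] : List dP1Mut.E) (1 : K) := by subst hf; rfl
  have ed2 : f d2 = Finsupp.single ([d2] : List dP1Mut.E) (1 : K) := by subst hf; rfl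
  have ed3 : f d3 = -Finsupp.single ([d3] : List dP1Mut.E) (1 : K) + Finsupp.single ([R2s, bs] : List dP1Mut.E) (1 : K) := by subst hf; rfl
  have eR3 : f R3 = Finsupp.single ([R3] : List dP1Mut.E) (1 : K) := by subst hf; rfl
  have eaR1 : f aR1 = Finsupp.single ([aR1] : List dP1Mut.E) (1 : K) := by subst hf; rfl
  have eaR2 : f aR2 = Finsupp.single ([aR2] : List dP1Mut.E) (1 : K) := by subst hf; rfl
  have ebR1 : f bR1 = Finsupp.single ([bR1] : List dP1Mut.E) (1 : K) + Finsupp.single ([c2, R3] : List dP1Mut.E) (1 : K) := by subst hf; rfl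
  have ebR2 : f bR2 = Finsupp.single ([bR2] : List dP1Mut.E) (1 : K) + Finsupp.single ([c1, R3] : List dP1Mut.E) (1 : K) := by subst hf; rfl
  simp [Quiv.substList, eas, ebs, eR1s, eR2s, ec1, ec2, ed1, ed2, ed3, eR3, eaR1, eaR2, ebR1, ebR2, Finsupp.sum_single_index, Finsupp.sum_add_index',
    Finsupp.sum_sub_index, Finsupp.sum_neg_index, Finsupp.single_add, Finsupp.single_sub,
    Finsupp.single_neg, sub_smul, add_smul, neg_smul, -Finsupp.single_mul,
    Finsupp.sum_add, Finsupp.sum_sub, Finsupp.sum_neg,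
    sub_mul, mul_sub, add_mul, mul_add, neg_mul, mul_neg, dP1MutPotBar]
  abel!

private lemma potBar_support (K : Type) [Field K] :
    ∀ l ∈ (dP1MutPotBar K).support,
      l = ([c2, R3, R1s, bs] : List dP1Mut.E) ∨ l = ([c1, R3, R2s, bs] : List dP1Mut.E) ∨
      l = ([d2, c2, aR2] : List dP1Mut.E) ∨ l = ([d2, c1, aR1] : List dP1Mut.E) ∨
      l = ([aR1, R1s, as] : List dP1Mut.E) ∨ l = ([aR2, R2s, as] : List dP1Mut.E) := by
  intro l hl
  rw [Finsupp.mem_support_iff] at hl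
  by_contra h
  push_neg at h
  obtain ⟨h1, h2, h3, h4, h5, h6⟩ := h
  apply hl
  rw [dP1MutPotBar]
  delta dP1Mut at *
  simp only [Finsupp.add_apply, Finsupp.sub_apply]
  rw [Finsupp.single_eq_of_ne h1, Finsupp.single_eq_of_ne h2, Finsupp.single_eq_of_ne h3,
    Finsupp.single_eq_of_ne h4, Finsupp.single_eq_of_ne h5, Finsupp.single_eq_of_ne h6]
  simp

end Aux

open MutArr in
/-- For the `dP1` quiver with its good potential, the mutation at vertex `1`
yields the quiver with arrows `a*, b*, R₁*, R₂*, c₁, c₂, d₂, R₃, [aR₁], [aR₂]` and potential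
`S̄ = c₂R₃R₁*b* + c₁R₃R₂*b* + d₂c₂[aR₂] − d₂c₁[aR₁] + [aR₁]R₁*a* + [aR₂]R₂*a*`: after the
right equivalence `φ`, the intermediate potential `S̃` decomposes as a trivial part
`d₁[bR₁] + d₃[bR₂]` plus the reduced potential `S̄`, which no longer involves the massive
arrows `d₁, d₃, [bR₁], [bR₂]`. -/
theorem dP1_mutation_at_vertex_one (K : Type) [Field K] :
    dP1Mut.CycEquiv K
      (dP1Mut.subst K (dP1MutPhi K) (dP1MutPotTilde K))
      ((Finsupp.single [d1, bR1] 1 + Finsupp.single [d3, bR2] 1) + dP1MutPotBar K) ∧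
    (∀ l ∈ ((Finsupp.single [d1, bR1] (1 : K)) + Finsupp.single [d3, bR2] 1).support,
      l.length = 2) ∧
    (∀ l ∈ (dP1MutPotBar K).support, l.length ≠ 2) ∧
    (∀ l ∈ (dP1MutPotBar K).support, ∀ x ∈ l,
      x ≠ d1 ∧ x ≠ d3 ∧ x ≠ bR1 ∧ x ≠ bR2) := by
  constructor
  · rw [Quiv.CycEquiv, subst_eval]
    have gen : ∀ l : List dP1Mut.E, dP1Mut.IsCycle l →
        Finsupp.single l (1 : K) - Finsupp.single (l.rotate 1) 1 ∈
          Submodule.span K {x : List dP1Mut.E →₀ K | ∃ l : List dP1Mut.E,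
            dP1Mut.IsCycle l ∧
            x = Finsupp.single l 1 - Finsupp.single (l.rotate 1) 1} :=
      fun l hl => Submodule.subset_span ⟨l, hl, rfl⟩
    have g1 := gen [R3, d3, c1] ⟨by simp, ⟨rfl, rfl, trivial⟩, rfl⟩
    have g2 := gen [R3, d1, c2] ⟨by simp, ⟨rfl, rfl, trivial⟩, rfl⟩
    have g3 := gen [R3, R2s, bs, c1] ⟨by simp, ⟨rfl, rfl, rfl, trivial⟩, rfl⟩
    have g4 := gen [R3, R1s, bs, c2] ⟨by simp, ⟨rfl, rfl, rfl, trivial⟩, rfl⟩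
    have g5 := gen [bR1, R1s, bs] ⟨by simp, ⟨rfl, rfl, trivial⟩, rfl⟩
    have g6 := gen [bR2, R2s, bs] ⟨by simp, ⟨rfl, rfl, trivial⟩, rfl⟩
    rw [show (([R3, d3, c1] : List dP1Mut.E).rotate 1) = [d3, c1, R3] by rfl] at g1
    rw [show (([R3, d1, c2] : List dP1Mut.E).rotate 1) = [d1, c2, R3] by rfl] at g2
    rw [show (([R3, R2s, bs, c1] : List dP1Mut.E).rotate 1) = [R2s, bs, c1, R3] by rfl] at g3
    rw [show (([R3, R1s, bs, c2] : List dP1Mut.E).rotate 1) = [R1s, bs, c2, R3] by rfl] at g4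
    rw [show (([bR1, R1s, bs] : List dP1Mut.E).rotate 1) = [R1s, bs, bR1] by rfl] at g5
    rw [show (([bR2, R2s, bs] : List dP1Mut.E).rotate 1) = [R2s, bs, bR2] by rfl] at g6
    rw [add_sub_cancel_left]
    exact Submodule.add_mem _ (Submodule.add_mem _ (Submodule.add_mem _ (Submodule.add_mem _
      (Submodule.sub_mem _ (Submodule.neg_mem _ g1) g2) g3) g4) g5) g6
  refine ⟨?_, ?_, ?_⟩
  · intro l hl
    have h := Finset.mem_of_subset Finsupp.support_add hl
    rcases Finset.mem_union.1 h with h | h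
    · have := Finsupp.support_single_subset h
      simp only [Finset.mem_singleton] at this
      subst this; rfl
    · have := Finsupp.support_single_subset h
      simp only [Finset.mem_singleton] at this
      subst this; rfl
  · intro l hl
    rcases potBar_support K l hl with h | h | h | h | h | h <;> subst h <;> decide
  · intro l hl
    rcases potBar_support K l hl with h | h | h | h | h | h <;> subst h <;> delta dP1Mut <;> decide
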